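/- Let q be an odd prime and let B, M, X be real numbers with 1 ≤ M ≤ B, 2B < q, 2M < q and 1 ≤ X < q. For every ε > 0 there is a constant C(ε) such that the number of quintuples (b₁, b₂, m₁, m₂, s) of integers with B ≤ b₁, b₂ ≤ 2B, M ≤ m₁, m₂ ≤ 2M, 0 < |s| ≤ X, gcd(b₁, m₁) = gcd(b₂, m₂) = 1, and m₁ b₁^{−1} − m₂ b₂^{−1} ≡ s (mod q) (the inverses being taken modulo q) is at most C(ε) q^ε ( M² + X² B² M² / q ). -/

import Mathlib

open Finset in
lemma divisor_bound {δ : ℝ} (hδ : 0 < δ) :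
    ∃ C : ℝ, 1 ≤ C ∧ ∀ n : ℕ, n ≠ 0 → (n.divisors.card : ℝ) ≤ C * (n : ℝ) ^ δ := by
  have hlog2 : (0:ℝ) < Real.log 2 := Real.log_pos (by norm_num)
  set A : ℝ := max 1 (2 / (δ * Real.log 2)) with hA
  have hA1 : 1 ≤ A := le_max_left _ _
  have hA0 : (0:ℝ) ≤ A := by linarith
  set T : ℕ := ⌈(2:ℝ) ^ (1/δ)⌉₊ with hT
  refine ⟨A ^ (T + 1), one_le_pow₀ hA1, fun n hn => ?_⟩
  -- pointwise bound
  have key : ∀ p ∈ n.primeFactors,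
      ((n.factorization p + 1 : ℕ) : ℝ) ≤
        (if p ≤ T then A else 1) * (((p : ℝ) ^ (n.factorization p)) ^ δ) := by
    intro p hp
    have hprime : p.Prime := Nat.prime_of_mem_primeFactors hp
    have hp2 : (2:ℝ) ≤ (p:ℝ) := by exact_mod_cast hprime.two_le
    have hp0 : (0:ℝ) ≤ (p:ℝ) := by linarith
    set a : ℕ := n.factorization p with ha
    have hpow_pos : (0:ℝ) < ((p:ℝ) ^ a) ^ δ :=
      Real.rpow_pos_of_pos (pow_pos (by linarith) a) δ
    by_cases hpt : p ≤ T
    · simp only [hpt, if_true]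
      rcases Nat.eq_zero_or_pos a with h0 | hpos
      · rw [h0]; simpa using hA1
      · -- a ≥ 1
        have h2a : ((2:ℝ) ^ a) ^ δ ≤ ((p:ℝ) ^ a) ^ δ :=
          Real.rpow_le_rpow (by positivity) (pow_le_pow_left₀ (by norm_num) hp2 a) hδ.le
        have hexp : ((2:ℝ) ^ a) ^ δ = Real.exp (δ * (a * Real.log 2)) := by
          rw [← Real.rpow_natCast (2:ℝ) a, ← Real.rpow_mul (by norm_num : (0:ℝ) ≤ 2),
            Real.rpow_def_of_pos (by norm_num : (0:ℝ) < 2)]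
          ring_nf
        have hlb : δ * (a * Real.log 2) ≤ ((2:ℝ) ^ a) ^ δ := by
          rw [hexp]
          have := Real.add_one_le_exp (δ * (a * Real.log 2))
          linarith
        have haR : (1:ℝ) ≤ (a:ℝ) := by exact_mod_cast hpos
        have hAge : 2 / (δ * Real.log 2) ≤ A := le_max_right _ _
        have hd : (0:ℝ) < δ * Real.log 2 := by positivity
        have h2a' : δ * (a * Real.log 2) ≤ ((p:ℝ) ^ a) ^ δ := le_trans hlb h2a
        have heq : (2 / (δ * Real.log 2)) * (δ * ((a:ℝ) * Real.log 2)) = 2 * (a:ℝ) := by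
          field_simp
        have : ((a:ℝ) + 1) ≤ (2 / (δ * Real.log 2)) * (δ * ((a:ℝ) * Real.log 2)) := by
          rw [heq]; linarith
        calc ((a + 1 : ℕ) : ℝ) = (a:ℝ) + 1 := by push_cast; ring
          _ ≤ (2 / (δ * Real.log 2)) * (δ * ((a:ℝ) * Real.log 2)) := this
          _ ≤ A * (δ * ((a:ℝ) * Real.log 2)) := by
              apply mul_le_mul_of_nonneg_right hAge; positivity
          _ ≤ A * (((p:ℝ) ^ a) ^ δ) := mul_le_mul_of_nonneg_left h2a' hA0
    · simp only [hpt, if_false, one_mul]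
      -- large p : p^δ ≥ 2
      have hTle : (2:ℝ) ^ (1/δ) ≤ (T:ℝ) := Nat.le_ceil _
      have hpT : (T:ℝ) ≤ (p:ℝ) := by exact_mod_cast (Nat.not_le.mp hpt).le
      have h2p : (2:ℝ) ≤ (p:ℝ) ^ δ := by
        have : ((2:ℝ) ^ (1/δ)) ^ δ ≤ (p:ℝ) ^ δ :=
          Real.rpow_le_rpow (by positivity) (le_trans hTle hpT) hδ.le
        rwa [← Real.rpow_mul (by norm_num : (0:ℝ) ≤ 2), one_div,
          inv_mul_cancel₀ hδ.ne', Real.rpow_one] at this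
      have hswap : ((p:ℝ) ^ a) ^ δ = ((p:ℝ) ^ δ) ^ a := by
        rw [← Real.rpow_natCast (p:ℝ) a, ← Real.rpow_mul hp0, mul_comm,
          Real.rpow_mul hp0, Real.rpow_natCast]
      rw [hswap]
      calc ((a + 1 : ℕ) : ℝ) ≤ ((2:ℝ)) ^ a := by
            have h1 : a + 1 ≤ 2 ^ a := Nat.lt_two_pow_self
            exact_mod_cast h1
        _ ≤ ((p:ℝ) ^ δ) ^ a := pow_le_pow_left₀ (by norm_num) h2p a
  -- assemble
  have hcard : (n.divisors.card : ℝ) = ∏ p ∈ n.primeFactors, ((n.factorization p + 1 : ℕ) : ℝ) := by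
    rw [Nat.card_divisors hn]; push_cast; rfl
  have hprod_le : (n.divisors.card : ℝ) ≤
      ∏ p ∈ n.primeFactors, ((if p ≤ T then A else 1) * (((p : ℝ) ^ (n.factorization p)) ^ δ)) := by
    rw [hcard]
    exact Finset.prod_le_prod (fun i _ => by positivity) key
  rw [Finset.prod_mul_distrib] at hprod_le
  have hn_nat : ∏ p ∈ n.primeFactors, p ^ (n.factorization p) = n := by
    simpa [Finsupp.prod] using Nat.factorization_prod_pow_eq_self hn
  have hn_eq : ∏ p ∈ n.primeFactors, ((p : ℝ) ^ (n.factorization p)) = (n : ℝ) := by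
    conv_rhs => rw [← hn_nat]
    push_cast
    rfl
  have hrpow : ∏ p ∈ n.primeFactors, (((p : ℝ) ^ (n.factorization p)) ^ δ) = (n:ℝ) ^ δ := by
    rw [Real.finset_prod_rpow _ _ (fun i _ => by positivity) δ, hn_eq]
  rw [hrpow] at hprod_le
  have hite : ∏ p ∈ n.primeFactors, (if p ≤ T then A else 1) ≤ A ^ (T + 1) := by
    rw [Finset.prod_ite, Finset.prod_const, Finset.prod_const, one_pow, mul_one]
    apply pow_le_pow_right₀ hA1
    calc (n.primeFactors.filter (fun p => p ≤ T)).card ≤ (Finset.range (T+1)).card := by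
          apply Finset.card_le_card
          intro x hx
          simp only [Finset.mem_filter] at hx
          simp [Nat.lt_succ_iff, hx.2]
      _ = T + 1 := Finset.card_range _
  calc (n.divisors.card : ℝ) ≤ (∏ p ∈ n.primeFactors, (if p ≤ T then A else 1)) * (n:ℝ) ^ δ := hprod_le
    _ ≤ A ^ (T+1) * (n:ℝ) ^ δ := by
        apply mul_le_mul_of_nonneg_right hite (Real.rpow_nonneg (Nat.cast_nonneg n) δ)

lemma abs3 (x y z : ℝ) : |x - y - z| ≤ |x| + |y| + |z| := by
  have h1 : |x - y - z| ≤ |x - y| + |z| := by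
    rw [sub_eq_add_neg (x - y) z]
    exact (abs_add_le _ _).trans (by rw [abs_neg])
  have h2 : |x - y| ≤ |x| + |y| := by
    rw [sub_eq_add_neg]
    exact (abs_add_le _ _).trans (by rw [abs_neg])
  linarith

set_option maxHeartbeats 1000000 in
theorem count_close_fractions :
    ∀ ε > (0 : ℝ), ∃ C : ℝ, ∀ (q : ℕ) (hq : q.Prime) (hodd : Odd q), ∀ B M X : ℝ,
      1 ≤ M → M ≤ B → 2 * B < q → 2 * M < q → 1 ≤ X → X < q →
      ({p : ℕ × ℕ × ℕ × ℕ × ℤ |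
          B ≤ (p.1 : ℝ) ∧ (p.1 : ℝ) ≤ 2 * B ∧
          B ≤ (p.2.1 : ℝ) ∧ (p.2.1 : ℝ) ≤ 2 * B ∧
          M ≤ (p.2.2.1 : ℝ) ∧ (p.2.2.1 : ℝ) ≤ 2 * M ∧
          M ≤ (p.2.2.2.1 : ℝ) ∧ (p.2.2.2.1 : ℝ) ≤ 2 * M ∧
          p.2.2.2.2 ≠ 0 ∧ abs ((p.2.2.2.2 : ℤ) : ℝ) ≤ X ∧
          Nat.gcd p.1 p.2.2.1 = 1 ∧ Nat.gcd p.2.1 p.2.2.2.1 = 1 ∧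
          (p.2.2.1 : ZMod q) * (p.1 : ZMod q)⁻¹ -
            (p.2.2.2.1 : ZMod q) * (p.2.1 : ZMod q)⁻¹ = (p.2.2.2.2 : ZMod q)}.ncard : ℝ)
        ≤ C * (q : ℝ) ^ ε * (M ^ 2 + X ^ 2 * B ^ 2 * M ^ 2 / q) := by
  intro ε hε
  obtain ⟨C₀, hC₀1, hC₀⟩ := divisor_bound (show (0:ℝ) < ε/6 by linarith)
  refine ⟨4 + 384 * C₀, ?_⟩
  intro q hq hodd B M X hM1 hMB hBq hMq hX1 hXq
  haveI := Fact.mk hq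
  classical
  set S : Set (ℕ × ℕ × ℕ × ℕ × ℤ) := {p : ℕ × ℕ × ℕ × ℕ × ℤ |
          B ≤ (p.1 : ℝ) ∧ (p.1 : ℝ) ≤ 2 * B ∧
          B ≤ (p.2.1 : ℝ) ∧ (p.2.1 : ℝ) ≤ 2 * B ∧
          M ≤ (p.2.2.1 : ℝ) ∧ (p.2.2.1 : ℝ) ≤ 2 * M ∧
          M ≤ (p.2.2.2.1 : ℝ) ∧ (p.2.2.2.1 : ℝ) ≤ 2 * M ∧
          p.2.2.2.2 ≠ 0 ∧ abs ((p.2.2.2.2 : ℤ) : ℝ) ≤ X ∧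
          Nat.gcd p.1 p.2.2.1 = 1 ∧ Nat.gcd p.2.1 p.2.2.2.1 = 1 ∧
          (p.2.2.1 : ZMod q) * (p.1 : ZMod q)⁻¹ -
            (p.2.2.2.1 : ZMod q) * (p.2.1 : ZMod q)⁻¹ = (p.2.2.2.2 : ZMod q)} with hS
  -- numeric basics
  have hq2 : (2 : ℕ) ≤ q := hq.two_le
  have hq0R : (0:ℝ) < q := by positivity
  have hq2R : (2:ℝ) ≤ q := by exact_mod_cast hq2
  have hB1 : (1:ℝ) ≤ B := le_trans hM1 hMB
  have hB0 : (0:ℝ) < B := by linarith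
  have hM0 : (0:ℝ) < M := by linarith
  have hX0 : (0:ℝ) < X := by linarith
  -- bounds for the box
  set bU : ℕ := ⌊2*B⌋₊ with hbU
  set mU : ℕ := ⌊2*M⌋₊ with hmU
  set xU : ℤ := ⌊X⌋ with hxU
  set kU : ℤ := ⌊12*X*B^2/q⌋ with hkU
  have hxU1 : (1:ℤ) ≤ xU := by
    rw [hxU]; exact_mod_cast Int.le_floor.mpr (by push_cast; linarith)
  have hkU0 : (0:ℤ) ≤ kU := Int.floor_nonneg.mpr (by positivity)
  have hmUR : (mU : ℝ) ≤ 2*M := Nat.floor_le (by positivity)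
  have hxUR : (xU : ℝ) ≤ X := Int.floor_le X
  have hkUR : (kU : ℝ) ≤ 12*X*B^2/q := Int.floor_le _
  set box : Finset (ℕ × ℕ × ℕ × ℕ × ℤ) :=
    Finset.Icc 1 bU ×ˢ Finset.Icc 1 bU ×ˢ Finset.Icc 1 mU ×ˢ Finset.Icc 1 mU ×ˢ
      Finset.Icc (-xU) xU with hbox
  set T : Finset (ℕ × ℕ × ℕ × ℕ × ℤ) := box.filter (fun p => p ∈ S) with hT
  -- the quantity E p, which is ≡ 0 mod q, and its quotient K p
  set E : ℕ × ℕ × ℕ × ℕ × ℤ → ℤ := fun p =>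
    (p.2.2.1 : ℤ) * p.2.1 - (p.2.2.2.1 : ℤ) * p.1 - p.2.2.2.2 * (p.1 * p.2.1) with hE
  set K : ℕ × ℕ × ℕ × ℕ × ℤ → ℤ := fun p => E p / q with hK
  -- membership extraction
  have hmemT : ∀ p ∈ T, p ∈ S := fun p hp => (Finset.mem_filter.mp hp).2
  -- basic per-element facts
  have hfacts : ∀ p ∈ T, (1 ≤ p.1 ∧ 1 ≤ p.2.1 ∧ 1 ≤ p.2.2.1 ∧ 1 ≤ p.2.2.2.1) ∧
      (p.1 < q ∧ p.2.1 < q ∧ p.2.2.1 < q ∧ p.2.2.2.1 < q) := by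
    intro p hp
    obtain ⟨h1, h2, h3, h4, h5, h6, h7, h8, h9, h10, h11, h12, h13⟩ := hmemT p hp
    have e1 : (1:ℝ) ≤ (p.1:ℝ) := by linarith
    have e2 : (1:ℝ) ≤ (p.2.1:ℝ) := by linarith
    have e3 : (1:ℝ) ≤ (p.2.2.1:ℝ) := by linarith
    have e4 : (1:ℝ) ≤ (p.2.2.2.1:ℝ) := by linarith
    have f1 : (p.1:ℝ) < (q:ℝ) := by linarith
    have f2 : (p.2.1:ℝ) < (q:ℝ) := by linarith
    have f3 : (p.2.2.1:ℝ) < (q:ℝ) := by linarith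
    have f4 : (p.2.2.2.1:ℝ) < (q:ℝ) := by linarith
    exact ⟨⟨by exact_mod_cast e1, by exact_mod_cast e2, by exact_mod_cast e3,
      by exact_mod_cast e4⟩, ⟨by exact_mod_cast f1, by exact_mod_cast f2,
      by exact_mod_cast f3, by exact_mod_cast f4⟩⟩
  -- divisibility : q ∣ E p
  have hdvd : ∀ p ∈ T, (q : ℤ) ∣ E p := by
    intro p hp
    obtain ⟨h1, h2, h3, h4, h5, h6, h7, h8, h9, h10, h11, h12, h13⟩ := hmemT p hp
    obtain ⟨⟨g1, g2, g3, g4⟩, ⟨l1, l2, l3, l4⟩⟩ := hfacts p hp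
    have hb1 : ((p.1 : ℕ) : ZMod q) ≠ 0 := by
      rw [Ne, ZMod.natCast_eq_zero_iff]
      intro hdvd'
      have := Nat.le_of_dvd (by omega) hdvd'
      omega
    have hb2 : ((p.2.1 : ℕ) : ZMod q) ≠ 0 := by
      rw [Ne, ZMod.natCast_eq_zero_iff]
      intro hdvd'
      have := Nat.le_of_dvd (by omega) hdvd'
      omega
    have hi1 : (p.1 : ZMod q) * (p.1 : ZMod q)⁻¹ = 1 := mul_inv_cancel₀ hb1
    have hi2 : (p.2.1 : ZMod q) * (p.2.1 : ZMod q)⁻¹ = 1 := mul_inv_cancel₀ hb2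
    have hEpdef : E p = (p.2.2.1 : ℤ) * p.2.1 - (p.2.2.2.1 : ℤ) * p.1
        - p.2.2.2.2 * ((p.1 : ℤ) * p.2.1) := rfl
    have hzero : ((E p : ℤ) : ZMod q) = 0 := by
      rw [hEpdef]
      push_cast
      linear_combination ((p.1 : ZMod q) * (p.2.1 : ZMod q)) * h13
        - ((p.2.2.1 : ZMod q) * (p.2.1 : ZMod q)) * hi1
        + ((p.2.2.2.1 : ZMod q) * (p.1 : ZMod q)) * hi2
    exact (ZMod.intCast_zmod_eq_zero_iff_dvd _ q).mp hzero
  have hEK : ∀ p ∈ T, E p = (q : ℤ) * K p := by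
    intro p hp
    rw [hK]
    exact (Int.mul_ediv_cancel' (hdvd p hp)).symm
  -- subset
  have hsub : S ⊆ ↑T := by
    intro p hp
    obtain ⟨h1, h2, h3, h4, h5, h6, h7, h8, h9, h10, h11, h12, h13⟩ := hp
    have hb1lo : 1 ≤ p.1 := by exact_mod_cast (le_trans hB1 h1 : (1:ℝ) ≤ (p.1:ℝ))
    have hb2lo : 1 ≤ p.2.1 := by exact_mod_cast (le_trans hB1 h3 : (1:ℝ) ≤ (p.2.1:ℝ))
    have hm1lo : 1 ≤ p.2.2.1 := by exact_mod_cast (le_trans hM1 h5 : (1:ℝ) ≤ (p.2.2.1:ℝ))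
    have hm2lo : 1 ≤ p.2.2.2.1 := by exact_mod_cast (le_trans hM1 h7 : (1:ℝ) ≤ (p.2.2.2.1:ℝ))
    have hshi : p.2.2.2.2 ≤ xU := Int.le_floor.mpr (le_trans (le_abs_self _) h10)
    have hslo : -xU ≤ p.2.2.2.2 := by
      have hx : ((-p.2.2.2.2 : ℤ) : ℝ) ≤ X := by
        push_cast
        exact le_trans (neg_le_abs _) h10
      have := Int.le_floor.mpr hx
      omega
    have hmembox : p ∈ box := by
      simp only [hbox, Finset.mem_product, Finset.mem_Icc]
      exact ⟨⟨hb1lo, Nat.le_floor h2⟩, ⟨hb2lo, Nat.le_floor h4⟩, ⟨hm1lo, Nat.le_floor h6⟩,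
        ⟨hm2lo, Nat.le_floor h8⟩, hslo, hshi⟩
    simp only [hT, Finset.coe_filter, Set.mem_setOf_eq]
    exact ⟨hmembox, h1, h2, h3, h4, h5, h6, h7, h8, h9, h10, h11, h12, h13⟩
  have hncard : ((S.ncard : ℕ) : ℝ) ≤ (T.card : ℝ) := by
    have h := Set.ncard_le_ncard hsub T.finite_toSet
    rw [Set.ncard_coe_finset] at h
    exact_mod_cast h
  -- split
  have hsplit : T.card = (T.filter (fun p => E p = 0)).card +
      (T.filter (fun p => ¬ E p = 0)).card :=
    (Finset.card_filter_add_card_filter_not (s := T) (fun p => E p = 0)).symm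
  -- Part A : diagonal, E p = 0
  have hclaim : ∀ p ∈ T.filter (fun p => E p = 0), p.2.1 = p.1 ∧
      p.2.2.2.2 * (p.1 : ℤ) = (p.2.2.1 : ℤ) - (p.2.2.2.1 : ℤ) ∧ |p.2.2.2.2| = 1 := by
    intro p hp
    rw [Finset.mem_filter] at hp
    obtain ⟨hpT, hE0⟩ := hp
    obtain ⟨h1, h2, h3, h4, h5, h6, h7, h8, h9, h10, h11, h12, h13⟩ := hmemT p hpT
    obtain ⟨⟨g1, g2, g3, g4⟩, -⟩ := hfacts p hpT
    have hEp : (p.2.2.1 : ℤ) * p.2.1 - (p.2.2.2.1 : ℤ) * p.1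
        - p.2.2.2.2 * ((p.1 : ℤ) * p.2.1) = 0 := hE0
    have hco1 : IsCoprime (p.1 : ℤ) (p.2.2.1 : ℤ) := Nat.isCoprime_iff_coprime.mpr h11
    have hco2 : IsCoprime (p.2.1 : ℤ) (p.2.2.2.1 : ℤ) := Nat.isCoprime_iff_coprime.mpr h12
    have hd1 : (p.1 : ℤ) ∣ (p.2.2.1 : ℤ) * p.2.1 :=
      ⟨(p.2.2.2.1 : ℤ) + p.2.2.2.2 * p.2.1, by linear_combination hEp⟩
    have hd2 : (p.2.1 : ℤ) ∣ (p.2.2.2.1 : ℤ) * p.1 :=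
      ⟨(p.2.2.1 : ℤ) - p.2.2.2.2 * p.1, by linear_combination -hEp⟩
    have hb12 : (p.1 : ℤ) ∣ (p.2.1 : ℤ) := hco1.dvd_of_dvd_mul_left hd1
    have hb21 : (p.2.1 : ℤ) ∣ (p.1 : ℤ) := hco2.dvd_of_dvd_mul_left hd2
    have hbeq : p.2.1 = p.1 :=
      Nat.dvd_antisymm (Int.natCast_dvd_natCast.mp hb21) (Int.natCast_dvd_natCast.mp hb12)
    have hb0 : (p.1 : ℤ) ≠ 0 := by
      have : (1:ℤ) ≤ ((p.1:ℕ):ℤ) := by exact_mod_cast g1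
      omega
    have hsb : p.2.2.2.2 * (p.1 : ℤ) = (p.2.2.1 : ℤ) - (p.2.2.2.1 : ℤ) := by
      rw [hbeq] at hEp
      have hz : (p.1 : ℤ) * (p.2.2.2.2 * p.1 - ((p.2.2.1 : ℤ) - p.2.2.2.1)) = 0 := by
        linear_combination -hEp
      rcases mul_eq_zero.mp hz with h | h
      · exact absurd h hb0
      · linarith
    refine ⟨hbeq, hsb, ?_⟩
    have h1b : (1:ℤ) ≤ |p.2.2.2.2| := Int.one_le_abs h9
    have hb1pos : (0:ℝ) < (p.1:ℝ) := by linarith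
    have hmb : |(p.2.2.1:ℝ) - (p.2.2.2.1:ℝ)| ≤ M := abs_le.mpr ⟨by linarith, by linarith⟩
    have heqR : ((p.2.2.2.2:ℤ):ℝ) * (p.1:ℝ) = (p.2.2.1:ℝ) - (p.2.2.2.1:ℝ) := by
      exact_mod_cast congrArg (fun z : ℤ => (z:ℝ)) hsb
    have habsbd : |((p.2.2.2.2:ℤ):ℝ)| * (p.1:ℝ) ≤ M := by
      rw [← abs_of_nonneg (le_of_lt hb1pos), ← abs_mul, heqR]
      exact hmb
    have hle1 : |((p.2.2.2.2:ℤ):ℝ)| ≤ 1 := by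
      have hdiv : |((p.2.2.2.2:ℤ):ℝ)| ≤ M / (p.1:ℝ) := (le_div_iff₀ hb1pos).mpr habsbd
      have : M / (p.1:ℝ) ≤ 1 := (div_le_one hb1pos).mpr (by linarith)
      linarith
    have : |p.2.2.2.2| ≤ 1 := by
      have hcast : ((|p.2.2.2.2| : ℤ) : ℝ) ≤ 1 := by rw [Int.cast_abs]; exact hle1
      exact_mod_cast hcast
    omega
  have hpartA : ((T.filter (fun p => E p = 0)).card : ℝ) ≤ 4 * M^2 := by
    have hcard : (T.filter (fun p => E p = 0)).card ≤ (Finset.Icc 1 mU ×ˢ Finset.Icc 1 mU).card := by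
      apply Finset.card_le_card_of_injOn (fun p => (p.2.2.1, p.2.2.2.1))
      · intro p hp
        have hpT := (Finset.mem_filter.mp hp).1
        have hbox' := (Finset.mem_filter.mp hpT).1
        simp only [hbox, Finset.mem_product] at hbox'
        simp only [Finset.mem_product]
        exact Finset.mem_product.mpr ⟨hbox'.2.2.1, hbox'.2.2.2.1⟩
      · intro p hp p' hp' heq
        simp only [Prod.mk.injEq] at heq
        obtain ⟨hm1, hm2⟩ := heq
        obtain ⟨hb, hsb, habs⟩ := hclaim p hp
        obtain ⟨hb', hsb', habs'⟩ := hclaim p' hp'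
        obtain ⟨⟨g1, -, -, -⟩, -⟩ := hfacts p (Finset.mem_filter.mp hp).1
        obtain ⟨⟨g1', -, -, -⟩, -⟩ := hfacts p' (Finset.mem_filter.mp hp').1
        rw [hm1, hm2] at hsb
        have hbb : ((p.1:ℕ):ℤ) = ((p'.1:ℕ):ℤ) := by
          have e1 : ((p.1:ℕ):ℤ) = |p.2.2.2.2 * (p.1:ℤ)| := by
            rw [abs_mul, habs, one_mul, abs_of_nonneg (by positivity : (0:ℤ) ≤ ((p.1:ℕ):ℤ))]
          have e1' : ((p'.1:ℕ):ℤ) = |p'.2.2.2.2 * (p'.1:ℤ)| := by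
            rw [abs_mul, habs', one_mul, abs_of_nonneg (by positivity : (0:ℤ) ≤ ((p'.1:ℕ):ℤ))]
          rw [e1, e1', hsb, hsb']
        have hb1 : p.1 = p'.1 := by exact_mod_cast hbb
        have hb1ne : ((p'.1:ℕ):ℤ) ≠ 0 := by
          have : (1:ℤ) ≤ ((p'.1:ℕ):ℤ) := by exact_mod_cast g1'
          omega
        have hs : p.2.2.2.2 = p'.2.2.2.2 := by
          have hmul : p.2.2.2.2 * ((p'.1:ℕ):ℤ) = p'.2.2.2.2 * ((p'.1:ℕ):ℤ) := by
            rw [hsb', ← hsb, hbb]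
          exact mul_right_cancel₀ hb1ne hmul
        have hb2 : p.2.1 = p'.2.1 := by rw [hb, hb', hb1]
        exact Prod.ext hb1 (Prod.ext hb2 (Prod.ext hm1 (Prod.ext hm2 hs)))
    have hcard2 : (Finset.Icc 1 mU ×ˢ Finset.Icc 1 mU).card = mU * mU := by
      rw [Finset.card_product, Nat.card_Icc, Nat.add_sub_cancel]
    have hfin : ((T.filter (fun p => E p = 0)).card : ℝ) ≤ (mU:ℝ) * (mU:ℝ) := by
      have := hcard
      rw [hcard2] at this
      exact_mod_cast this
    calc ((T.filter (fun p => E p = 0)).card : ℝ) ≤ (mU:ℝ) * (mU:ℝ) := hfin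
      _ ≤ (2*M) * (2*M) := mul_le_mul hmUR hmUR (by positivity) (by linarith)
      _ = 4 * M^2 := by ring
  -- Part B : E p ≠ 0
  set t : Finset (ℤ × ℕ × ℕ × ℤ) :=
    ((Finset.Icc (-xU) xU).erase 0) ×ˢ Finset.Icc 1 mU ×ˢ Finset.Icc 1 mU ×ˢ
      ((Finset.Icc (-kU) kU).erase 0) with ht
  set F : ℕ × ℕ × ℕ × ℕ × ℤ → ℤ × ℕ × ℕ × ℤ :=
    fun p => (p.2.2.2.2, p.2.2.1, p.2.2.2.1, K p) with hF
  have hmaps : ∀ p ∈ T.filter (fun p => ¬ E p = 0), F p ∈ t := by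
    intro p hp
    rw [Finset.mem_filter] at hp
    obtain ⟨hpT, hE0⟩ := hp
    obtain ⟨h1, h2, h3, h4, h5, h6, h7, h8, h9, h10, h11, h12, h13⟩ := hmemT p hpT
    obtain ⟨⟨g1, g2, g3, g4⟩, -⟩ := hfacts p hpT
    have hEKp := hEK p hpT
    have hEpdef : E p = (p.2.2.1 : ℤ) * p.2.1 - (p.2.2.2.1 : ℤ) * p.1
        - p.2.2.2.2 * ((p.1 : ℤ) * p.2.1) := rfl
    -- bound on |E p|
    have hEb : |((E p : ℤ) : ℝ)| ≤ 12 * X * B^2 := by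
      have hcast : ((E p : ℤ) : ℝ) = (p.2.2.1:ℝ) * (p.2.1:ℝ) - (p.2.2.2.1:ℝ) * (p.1:ℝ)
          - ((p.2.2.2.2:ℤ):ℝ) * ((p.1:ℝ) * (p.2.1:ℝ)) := by
        rw [hEpdef]; push_cast; ring
      rw [hcast]
      have t1 : |(p.2.2.1:ℝ) * (p.2.1:ℝ)| ≤ 2*M*(2*B) := by
        rw [abs_of_nonneg (by positivity)]
        exact mul_le_mul h6 h4 (by positivity) (by positivity)
      have t2 : |(p.2.2.2.1:ℝ) * (p.1:ℝ)| ≤ 2*M*(2*B) := by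
        rw [abs_of_nonneg (by positivity)]
        exact mul_le_mul h8 h2 (by positivity) (by positivity)
      have t3 : |((p.2.2.2.2:ℤ):ℝ) * ((p.1:ℝ) * (p.2.1:ℝ))| ≤ X * (2*B*(2*B)) := by
        rw [abs_mul, abs_of_nonneg (by positivity : (0:ℝ) ≤ (p.1:ℝ) * (p.2.1:ℝ))]
        refine mul_le_mul h10 ?_ (by positivity) (by positivity)
        exact mul_le_mul h2 h4 (by positivity) (by positivity)
      have htri := abs3 ((p.2.2.1:ℝ) * (p.2.1:ℝ)) ((p.2.2.2.1:ℝ) * (p.1:ℝ))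
        (((p.2.2.2.2:ℤ):ℝ) * ((p.1:ℝ) * (p.2.1:ℝ)))
      have hend : 2*M*(2*B) + 2*M*(2*B) + X * (2*B*(2*B)) ≤ 12 * X * B^2 := by
        nlinarith [mul_le_mul_of_nonneg_right hMB hB0.le,
          mul_le_mul_of_nonneg_right hX1 (sq_nonneg B)]
      linarith
    -- bound on |K p|
    have hKb : |K p| ≤ kU := by
      have hqabs : (q:ℤ) * |K p| = |E p| := by
        rw [hEKp, abs_mul, abs_of_nonneg (by positivity : (0:ℤ) ≤ (q:ℤ))]
      apply Int.le_floor.mpr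
      rw [le_div_iff₀ hq0R]
      have hcast : ((|K p| : ℤ) : ℝ) * (q:ℝ) = |((E p : ℤ):ℝ)| := by
        rw [← Int.cast_abs, ← hqabs]
        push_cast
        ring
      rw [hcast]
      exact hEb
    have hK0 : K p ≠ 0 := fun h => hE0 (by rw [hEKp, h, mul_zero])
    have hKlo : -kU ≤ K p := (abs_le.mp hKb).1
    have hKhi : K p ≤ kU := (abs_le.mp hKb).2
    -- s bounds
    have hshi : p.2.2.2.2 ≤ xU := Int.le_floor.mpr (le_trans (le_abs_self _) h10)
    have hslo : -xU ≤ p.2.2.2.2 := by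
      have hx : ((-p.2.2.2.2 : ℤ) : ℝ) ≤ X := by
        push_cast
        exact le_trans (neg_le_abs _) h10
      have := Int.le_floor.mpr hx
      omega
    simp only [ht, hF, Finset.mem_product, Finset.mem_erase, Finset.mem_Icc]
    exact ⟨⟨h9, hslo, hshi⟩, ⟨g3, Nat.le_floor h6⟩, ⟨g4, Nat.le_floor h8⟩, hK0, hKlo, hKhi⟩
  have hfiber : ∀ a ∈ t,
      (((T.filter (fun p => ¬ E p = 0)).filter (fun p => F p = a)).card : ℝ) ≤
        2 * (C₀ * (q:ℝ) ^ ε) := by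
    rintro ⟨σ, μ₁, μ₂, κ⟩ ha
    simp only [ht, Finset.mem_product, Finset.mem_erase, Finset.mem_Icc] at ha
    obtain ⟨⟨hσ0, hσlo, hσhi⟩, ⟨hμ₁lo, hμ₁hi⟩, ⟨hμ₂lo, hμ₂hi⟩, hκ0, hκlo, hκhi⟩ := ha
    set N : ℤ := -σ * κ * q - (μ₁:ℤ) * μ₂ with hN
    have hμ₁R : (μ₁:ℝ) ≤ 2*M := le_trans (by exact_mod_cast hμ₁hi) hmUR
    have hμ₂R : (μ₂:ℝ) ≤ 2*M := le_trans (by exact_mod_cast hμ₂hi) hmUR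
    have hN0 : N ≠ 0 := by
      intro h
      have hdq : (q:ℤ) ∣ ((μ₁:ℤ) * μ₂) := ⟨-σ*κ, by linear_combination -h⟩
      have hdq' : q ∣ μ₁ * μ₂ := by exact_mod_cast hdq
      have hq1R : (1:ℝ) ≤ (q:ℝ) := by linarith
      rcases (Nat.Prime.dvd_mul hq).mp hdq' with h' | h'
      · have hle := Nat.le_of_dvd (by omega) h'
        have : (q:ℝ) ≤ (μ₁:ℝ) := by exact_mod_cast hle
        linarith
      · have hle := Nat.le_of_dvd (by omega) h'
        have : (q:ℝ) ≤ (μ₂:ℝ) := by exact_mod_cast hle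
        linarith
    -- identity on the fiber
    have hid : ∀ p ∈ (T.filter (fun p => ¬ E p = 0)).filter (fun p => F p = (σ, μ₁, μ₂, κ)),
        (σ * (p.1:ℤ) - μ₁) * (σ * (p.2.1:ℤ) + μ₂) = N := by
      intro p hp
      rw [Finset.mem_filter] at hp
      obtain ⟨hp1, hfp⟩ := hp
      rw [Finset.mem_filter] at hp1
      obtain ⟨hpT, hE0⟩ := hp1
      have hEKp := hEK p hpT
      simp only [hF, Prod.mk.injEq] at hfp
      obtain ⟨hfs, hfm1, hfm2, hfk⟩ := hfp
      have hEpdef : E p = (p.2.2.1 : ℤ) * p.2.1 - (p.2.2.2.1 : ℤ) * p.1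
          - p.2.2.2.2 * ((p.1 : ℤ) * p.2.1) := rfl
      rw [hEpdef] at hEKp
      rw [hN, ← hfs, ← hfm1, ← hfm2, ← hfk]
      linear_combination (-(p.2.2.2.2)) * hEKp
    set D : Finset ℤ := N.natAbs.divisors.image (fun d : ℕ => (d:ℤ)) ∪
      N.natAbs.divisors.image (fun d : ℕ => -(d:ℤ)) with hD
    have hDcard : D.card ≤ 2 * N.natAbs.divisors.card := by
      calc D.card ≤ (N.natAbs.divisors.image (fun d : ℕ => (d:ℤ))).card +
            (N.natAbs.divisors.image (fun d : ℕ => -(d:ℤ))).card := by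
            rw [hD]; exact Finset.card_union_le _ _
        _ ≤ N.natAbs.divisors.card + N.natAbs.divisors.card :=
            add_le_add Finset.card_image_le Finset.card_image_le
        _ = 2 * N.natAbs.divisors.card := by ring
    have hinj : ((T.filter (fun p => ¬ E p = 0)).filter
        (fun p => F p = (σ, μ₁, μ₂, κ))).card ≤ D.card := by
      apply Finset.card_le_card_of_injOn (fun p => σ * (p.1:ℤ) - μ₁)
      · intro p hp
        have hidp := hid p hp
        have ha1 : (σ * (p.1:ℤ) - μ₁) ∣ N := ⟨σ * (p.2.1:ℤ) + μ₂, hidp.symm⟩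
        have hmem : (σ * (p.1:ℤ) - μ₁).natAbs ∈ N.natAbs.divisors :=
          Nat.mem_divisors.mpr ⟨Int.natAbs_dvd_natAbs.mpr ha1, Int.natAbs_ne_zero.mpr hN0⟩
        rw [hD]
        rcases Int.natAbs_eq (σ * (p.1:ℤ) - μ₁) with h | h
        · apply Finset.mem_union_left
          apply Finset.mem_image.mpr
          exact ⟨(σ * (p.1:ℤ) - μ₁).natAbs, hmem, h.symm⟩
        · apply Finset.mem_union_right
          apply Finset.mem_image.mpr
          exact ⟨(σ * (p.1:ℤ) - μ₁).natAbs, hmem, h.symm⟩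
      · intro p hp p' hp' heq
        simp only at heq
        have hidp := hid p hp
        have hidp' := hid p' hp'
        have hfp := (Finset.mem_filter.mp hp).2
        have hfp' := (Finset.mem_filter.mp hp').2
        simp only [hF, Prod.mk.injEq] at hfp hfp'
        obtain ⟨hs, hm1, hm2, hk⟩ := hfp
        obtain ⟨hs', hm1', hm2', hk'⟩ := hfp'
        have hb1Z : ((p.1:ℕ):ℤ) = ((p'.1:ℕ):ℤ) := by
          have : σ * ((p.1:ℕ):ℤ) = σ * ((p'.1:ℕ):ℤ) := by linarith [heq]
          exact mul_left_cancel₀ hσ0 this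
        have hb1 : p.1 = p'.1 := by exact_mod_cast hb1Z
        have hfac : σ * (p.1:ℤ) - μ₁ ≠ 0 := by
          intro h
          exact hN0 (by rw [← hidp, h, zero_mul])
        have hb2 : p.2.1 = p'.2.1 := by
          have hprod : (σ * (p.1:ℤ) - μ₁) * (σ * (p.2.1:ℤ) + μ₂) =
              (σ * (p.1:ℤ) - μ₁) * (σ * (p'.2.1:ℤ) + μ₂) := by
            rw [hidp]
            rw [show σ * ((p.1:ℕ):ℤ) - (μ₁:ℤ) = σ * ((p'.1:ℕ):ℤ) - (μ₁:ℤ) by rw [hb1Z]]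
            exact hidp'.symm
          have h2 := mul_left_cancel₀ hfac hprod
          have h3 : σ * ((p.2.1:ℕ):ℤ) = σ * ((p'.2.1:ℕ):ℤ) := by linarith [h2]
          have := mul_left_cancel₀ hσ0 h3
          exact_mod_cast this
        have hseq : p.2.2.2.2 = p'.2.2.2.2 := by rw [hs, hs']
        have hm12 : p.2.2.1 = p'.2.2.1 := by rw [hm1, hm1']
        have hm22 : p.2.2.2.1 = p'.2.2.2.1 := by rw [hm2, hm2']
        exact Prod.ext hb1 (Prod.ext hb2 (Prod.ext hm12 (Prod.ext hm22 hseq)))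
    -- size of N
    have hσR : |(σ:ℝ)| ≤ X := by
      rw [abs_le]
      constructor
      · have : ((-xU:ℤ):ℝ) ≤ ((σ:ℤ):ℝ) := by exact_mod_cast hσlo
        push_cast at this
        linarith [hxUR]
      · have : ((σ:ℤ):ℝ) ≤ ((xU:ℤ):ℝ) := by exact_mod_cast hσhi
        linarith [hxUR]
    have hκR : |(κ:ℝ)| ≤ 12*X*B^2/q := by
      rw [abs_le]
      constructor
      · have : ((-kU:ℤ):ℝ) ≤ ((κ:ℤ):ℝ) := by exact_mod_cast hκlo
        push_cast at this
        linarith [hkUR]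
      · have : ((κ:ℤ):ℝ) ≤ ((kU:ℤ):ℝ) := by exact_mod_cast hκhi
        linarith [hkUR]
    have hNle : (N.natAbs : ℝ) ≤ (q:ℝ)^(6:ℕ) := by
      have hNabs : ((N.natAbs : ℕ) : ℝ) = |((N:ℤ):ℝ)| := by
        rw [Nat.cast_natAbs, Int.cast_abs]
      rw [hNabs, hN]
      have hexp : ((-σ * κ * q - (μ₁:ℤ) * μ₂ : ℤ) : ℝ) =
          -(((σ:ℝ) * κ * q) + (μ₁:ℝ) * μ₂) := by push_cast; ring
      rw [hexp, abs_neg]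
      have htri := abs_add_le ((σ:ℝ) * κ * q) ((μ₁:ℝ) * μ₂)
      have hb1 : |(σ:ℝ) * κ * q| ≤ 12*X^2*B^2 := by
        rw [abs_mul, abs_mul, abs_of_nonneg (le_of_lt hq0R)]
        calc |(σ:ℝ)| * |(κ:ℝ)| * (q:ℝ) ≤ X * (12*X*B^2/q) * q := by
              apply mul_le_mul_of_nonneg_right _ (le_of_lt hq0R)
              exact mul_le_mul hσR hκR (abs_nonneg _) (by linarith)
          _ = 12*X^2*B^2 := by field_simp
      have hb2 : |(μ₁:ℝ) * (μ₂:ℝ)| ≤ 4*M^2 := by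
        rw [abs_of_nonneg (by positivity)]
        calc (μ₁:ℝ) * (μ₂:ℝ) ≤ (2*M) * (2*M) :=
              mul_le_mul hμ₁R hμ₂R (by positivity) (by linarith)
          _ = 4*M^2 := by ring
      have hfin : 12*X^2*B^2 + 4*M^2 ≤ (q:ℝ)^(6:ℕ) := by
        have hx2 : X^2 ≤ (q:ℝ)^2 := pow_le_pow_left₀ hX0.le hXq.le 2
        have hb2' : (2*B)^2 ≤ (q:ℝ)^2 := pow_le_pow_left₀ (by linarith) hBq.le 2
        have hm2' : (2*M)^2 ≤ (q:ℝ)^2 := pow_le_pow_left₀ (by linarith) hMq.le 2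
        have hq4' : (4:ℝ) ≤ (q:ℝ)^2 := by
          calc (4:ℝ) = 2^2 := by norm_num
            _ ≤ (q:ℝ)^2 := pow_le_pow_left₀ (by norm_num) hq2R 2
        have hXB : X^2*(2*B)^2 ≤ (q:ℝ)^2*(q:ℝ)^2 :=
          mul_le_mul hx2 hb2' (sq_nonneg _) (by positivity)
        have key2 : (0:ℝ) ≤ ((q:ℝ)^2 - 4) * (q:ℝ)^4 := mul_nonneg (by linarith) (by positivity)
        have key3 : (0:ℝ) ≤ ((q:ℝ)^2 - 1) * (q:ℝ)^2 := mul_nonneg (by linarith) (by positivity)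
        nlinarith only [hXB, hm2', key2, key3]
      linarith
    have hdivR : ((N.natAbs.divisors.card : ℕ) : ℝ) ≤ C₀ * (q:ℝ)^ε := by
      have h1 := hC₀ N.natAbs (Int.natAbs_ne_zero.mpr hN0)
      have h2 : ((N.natAbs : ℕ) : ℝ)^(ε/6) ≤ ((q:ℝ)^(6:ℕ))^(ε/6) :=
        Real.rpow_le_rpow (by positivity) hNle (by linarith)
      have h3 : (((q:ℝ)^(6:ℕ)))^(ε/6) = (q:ℝ)^ε := by
        rw [← Real.rpow_natCast (q:ℝ) 6, ← Real.rpow_mul (by positivity)]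
        congr 1
        push_cast
        ring
      calc ((N.natAbs.divisors.card : ℕ) : ℝ) ≤ C₀ * ((N.natAbs : ℕ) : ℝ)^(ε/6) := h1
        _ ≤ C₀ * (q:ℝ)^ε := by
            rw [← h3]
            exact mul_le_mul_of_nonneg_left h2 (by linarith)
    calc (((T.filter (fun p => ¬ E p = 0)).filter
          (fun p => F p = (σ, μ₁, μ₂, κ))).card : ℝ) ≤ (D.card : ℝ) := by exact_mod_cast hinj
      _ ≤ 2 * ((N.natAbs.divisors.card : ℕ) : ℝ) := by exact_mod_cast hDcard
      _ ≤ 2 * (C₀ * (q:ℝ)^ε) := by linarith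
  have htcard : ((t.card : ℕ) : ℝ) ≤ (2*X) * ((2*M) * ((2*M) * (24 * X * B^2 / q))) := by
    have hcx : ((Finset.Icc (-xU) xU).erase 0).card = (2*xU).toNat := by
      rw [Finset.card_erase_of_mem (by simp only [Finset.mem_Icc]; omega), Int.card_Icc]
      omega
    have hck : ((Finset.Icc (-kU) kU).erase 0).card = (2*kU).toNat := by
      rw [Finset.card_erase_of_mem (by simp only [Finset.mem_Icc]; omega), Int.card_Icc]
      omega
    have hprod : t.card = (2*xU).toNat * (mU * (mU * (2*kU).toNat)) := by
      rw [ht, Finset.card_product, Finset.card_product, Finset.card_product, hcx, hck,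
        Nat.card_Icc, Nat.add_sub_cancel]
    have hxtR : (((2*xU).toNat : ℕ) : ℝ) ≤ 2*X := by
      have h := Int.toNat_of_nonneg (show (0:ℤ) ≤ 2*xU by omega)
      calc (((2*xU).toNat : ℕ) : ℝ) = (((2*xU).toNat : ℤ) : ℝ) := by push_cast; ring
        _ = ((2*xU : ℤ) : ℝ) := by rw [h]
        _ ≤ 2*X := by push_cast; linarith [hxUR]
    have hktR : (((2*kU).toNat : ℕ) : ℝ) ≤ 24*X*B^2/q := by
      have h := Int.toNat_of_nonneg (show (0:ℤ) ≤ 2*kU by omega)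
      calc (((2*kU).toNat : ℕ) : ℝ) = (((2*kU).toNat : ℤ) : ℝ) := by push_cast; ring
        _ = ((2*kU : ℤ) : ℝ) := by rw [h]
        _ ≤ 24*X*B^2/q := by
            push_cast
            have : (kU:ℝ) ≤ 12*X*B^2/q := hkUR
            rw [show (24:ℝ)*X*B^2/(q:ℝ) = 2*(12*X*B^2/(q:ℝ)) by ring]
            linarith
    calc ((t.card : ℕ) : ℝ)
        = (((2*xU).toNat : ℕ) : ℝ) * ((mU:ℝ) * ((mU:ℝ) * (((2*kU).toNat : ℕ) : ℝ))) := by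
          rw [hprod]; push_cast; ring
      _ ≤ (2*X) * ((2*M) * ((2*M) * (24 * X * B^2 / q))) := by
          apply mul_le_mul hxtR ?_ (by positivity) (by positivity)
          apply mul_le_mul hmUR ?_ (by positivity) (by positivity)
          exact mul_le_mul hmUR hktR (by positivity) (by positivity)
  have hpartB : ((T.filter (fun p => ¬ E p = 0)).card : ℝ) ≤
      ((t.card : ℕ) : ℝ) * (2 * (C₀ * (q:ℝ) ^ ε)) := by
    have hcount := Finset.card_eq_sum_card_fiberwise hmaps
    calc ((T.filter (fun p => ¬ E p = 0)).card : ℝ)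
        = ∑ a ∈ t, (((T.filter (fun p => ¬ E p = 0)).filter (fun p => F p = a)).card : ℝ) := by
          exact_mod_cast congrArg (Nat.cast : ℕ → ℝ) hcount
      _ ≤ ∑ _a ∈ t, 2 * (C₀ * (q:ℝ) ^ ε) := Finset.sum_le_sum hfiber
      _ = ((t.card : ℕ) : ℝ) * (2 * (C₀ * (q:ℝ) ^ ε)) := by
          rw [Finset.sum_const, nsmul_eq_mul]
  -- final assembly
  have hqe1 : (1:ℝ) ≤ (q:ℝ) ^ ε := by
    calc (1:ℝ) = (1:ℝ) ^ ε := (Real.one_rpow ε).symm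
    _ ≤ (q:ℝ) ^ ε := Real.rpow_le_rpow (by norm_num) (by linarith) hε.le
  have hY0 : (0:ℝ) ≤ X^2 * B^2 * M^2 / q := by positivity
  have hfinal : (T.card : ℝ) ≤
      (4 + 384 * C₀) * (q:ℝ) ^ ε * (M^2 + X^2*B^2*M^2/q) := by
    have h1 : (T.card : ℝ) = ((T.filter (fun p => E p = 0)).card : ℝ) +
        ((T.filter (fun p => ¬ E p = 0)).card : ℝ) := by exact_mod_cast hsplit
    have h2 : ((t.card : ℕ) : ℝ) * (2 * (C₀ * (q:ℝ) ^ ε)) ≤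
        384 * C₀ * (q:ℝ) ^ ε * (X^2*B^2*M^2/q) := by
      have hpos : (0:ℝ) ≤ 2 * (C₀ * (q:ℝ) ^ ε) := by positivity
      calc ((t.card : ℕ) : ℝ) * (2 * (C₀ * (q:ℝ) ^ ε))
          ≤ ((2*X) * ((2*M) * ((2*M) * (24 * X * B^2 / q)))) * (2 * (C₀ * (q:ℝ) ^ ε)) :=
            mul_le_mul_of_nonneg_right htcard hpos
        _ = 384 * C₀ * (q:ℝ) ^ ε * (X^2*B^2*M^2/q) := by ring
    have hM2 : (0:ℝ) ≤ M^2 := sq_nonneg M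
    have hkey : (0:ℝ) ≤ ((q:ℝ)^ε - 1) * M^2 := mul_nonneg (by linarith) hM2
    have hkey2 : (0:ℝ) ≤ ((q:ℝ)^ε) * (X^2*B^2*M^2/q) := mul_nonneg (by linarith) hY0
    have hC₀0 : (0:ℝ) ≤ C₀ := by linarith
    have e1 : 4*M^2 ≤ 4*((q:ℝ)^ε * M^2) := by nlinarith [hkey]
    have e3 : (0:ℝ) ≤ C₀ * ((q:ℝ)^ε * M^2) := mul_nonneg hC₀0 (by positivity)
    calc (T.card : ℝ) = ((T.filter (fun p => E p = 0)).card : ℝ) +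
        ((T.filter (fun p => ¬ E p = 0)).card : ℝ) := h1
      _ ≤ 4*M^2 + 384 * C₀ * (q:ℝ) ^ ε * (X^2*B^2*M^2/q) :=
          add_le_add hpartA (hpartB.trans h2)
      _ ≤ (4 + 384 * C₀) * (q:ℝ) ^ ε * (M^2 + X^2*B^2*M^2/q) := by nlinarith [e1, hkey2, e3]
  calc ((S.ncard : ℕ) : ℝ) ≤ (T.card : ℝ) := hncard
    _ ≤ (4 + 384 * C₀) * (q:ℝ) ^ ε * (M^2 + X^2*B^2*M^2/q) := hfinal
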